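/- Suppose {q_n} is a sequence of positive reals with β = lim_{n→∞} n(1−q_n) ∈ ℝ, and {a_n} is a sequence with a_n ∈ {1,…,n} and lim_{n→∞} a_n/n = a ∈ [0,1]. Suppose {a_{t_n}} is a subsequence such that the laws of π(a_{t_n})/t_n under μ_{t_n, q_{t_n}} converge in distribution to a probability measure v. Then the cumulative distribution function F_v of v is absolutely continuous. -/

import Mathlib

open Filter Finset MeasureTheory

/-- Number of inversions of a permutation of `Fin n`. -/
def inversions (n : ℕ) (π : Equiv.Perm (Fin n)) : ℕ :=
  (Finset.univ.filter (fun p : Fin n × Fin n => p.1 < p.2 ∧ π p.2 < π p.1)).card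

/-- The `(n,q)`-Mallows probability mass function on `S_n`. -/
noncomputable def mallowsPMF (n : ℕ) (q : ℝ) (π : Equiv.Perm (Fin n)) : ℝ :=
  q ^ inversions n π / ∑ σ : Equiv.Perm (Fin n), q ^ inversions n σ

open Classical in
/-- The `(n,q)`-Mallows probability of an event `P` of permutations. -/
noncomputable def mallowsProb (n : ℕ) (q : ℝ) (P : Equiv.Perm (Fin n) → Prop) : ℝ :=
  ∑ π : Equiv.Perm (Fin n), if P π then mallowsPMF n q π else 0

/-- Expectation with respect to the `(n,q)`-Mallows measure. -/
noncomputable def mallowsExp (n : ℕ) (q : ℝ) (f : Equiv.Perm (Fin n) → ℝ) : ℝ :=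
  ∑ π : Equiv.Perm (Fin n), mallowsPMF n q π * f π

/-- Action of a permutation of `Fin n` on one-based indices `{1,…,n}`. -/
def permAct (n : ℕ) (π : Equiv.Perm (Fin n)) (i : ℕ) : ℕ :=
  if h : 1 ≤ i ∧ i ≤ n then ((π ⟨i - 1, by omega⟩ : Fin n) : ℕ) + 1 else i

/-- The limiting density `u(x,y,β)` from Starr's theorem. -/
noncomputable def mallowsU (x y β : ℝ) : ℝ :=
  if β = 0 then 1
  else (β / 2) * Real.sinh (β / 2) /
    (Real.exp (β / 4) * Real.cosh (β * (x - y) / 2)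
      - Real.exp (-β / 4) * Real.cosh (β * (x + y - 1) / 2)) ^ 2

/-- A function `F : ℝ → ℝ` is absolutely continuous: for every `ε > 0` there is `δ > 0`
such that every finite collection of pairwise disjoint open intervals of total length
less than `δ` has total `F`-variation less than `ε`. -/
def AbsolutelyContinuousFun (F : ℝ → ℝ) : Prop :=
  ∀ ε > (0 : ℝ), ∃ δ > (0 : ℝ), ∀ (m : ℕ) (c d : ℕ → ℝ),
    (∀ k < m, c k < d k) →
    (∀ k < m, ∀ l < m, k ≠ l → Set.Ioo (c k) (d k) ∩ Set.Ioo (c l) (d l) = ∅) →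
    (∑ k ∈ Finset.range m, (d k - c k)) < δ →
    (∑ k ∈ Finset.range m, |F (d k) - F (c k)|) < ε

lemma swap_lt_iff {n : ℕ} {j k a b : Fin n} (hjk : (j:ℕ)+1 = k)
    (hab : ¬((a = j ∧ b = k) ∨ (a = k ∧ b = j))) :
    (Equiv.swap j k a < Equiv.swap j k b ↔ a < b) := by
  rw [Equiv.swap_apply_def, Equiv.swap_apply_def]
  simp only [Fin.ext_iff, Fin.lt_def, not_or, not_and_or] at *
  split_ifs <;> omega

lemma inversions_mul_swap {n : ℕ} (σ : Equiv.Perm (Fin n)) {j k : Fin n}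
    (hjk : (j:ℕ)+1 = k) :
    inversions n (Equiv.swap j k * σ) ≤ inversions n σ + 1 ∧
    inversions n σ ≤ inversions n (Equiv.swap j k * σ) + 1 := by
  classical
  set u := σ⁻¹ j with hu
  set w := σ⁻¹ k with hw
  set P : Fin n × Fin n := if u < w then (u, w) else (w, u) with hP
  have key : ∀ p : Fin n × Fin n, p ≠ P → p.1 < p.2 →
      ((Equiv.swap j k * σ) p.2 < (Equiv.swap j k * σ) p.1 ↔ σ p.2 < σ p.1) := by
    intro p hpP h12
    have hexc : ¬((σ p.2 = j ∧ σ p.1 = k) ∨ (σ p.2 = k ∧ σ p.1 = j)) := by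
      rintro (⟨h1, h2⟩ | ⟨h1, h2⟩)
      · have e2 : p.2 = u := by rw [hu, ← h1, Equiv.Perm.inv_def, Equiv.symm_apply_apply]
        have e1 : p.1 = w := by rw [hw, ← h2, Equiv.Perm.inv_def, Equiv.symm_apply_apply]
        apply hpP
        rw [e1, e2] at h12
        rw [hP, if_neg (not_lt.2 h12.le), ← e1, ← e2]
      · have e2 : p.2 = w := by rw [hw, ← h1, Equiv.Perm.inv_def, Equiv.symm_apply_apply]
        have e1 : p.1 = u := by rw [hu, ← h2, Equiv.Perm.inv_def, Equiv.symm_apply_apply]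
        apply hpP
        rw [e1, e2] at h12
        rw [hP, if_pos h12, ← e1, ← e2]
    simp only [Equiv.Perm.mul_apply]
    exact swap_lt_iff hjk hexc
  set A := Finset.univ.filter (fun p : Fin n × Fin n => p.1 < p.2 ∧
      (Equiv.swap j k * σ) p.2 < (Equiv.swap j k * σ) p.1) with hA
  set B := Finset.univ.filter (fun p : Fin n × Fin n => p.1 < p.2 ∧ σ p.2 < σ p.1) with hB
  have hAB : A ⊆ B ∪ {P} := by
    intro p hp
    rcases eq_or_ne p P with h | h
    · exact Finset.mem_union_right _ (by simp [h])
    · simp only [hA, Finset.mem_filter, Finset.mem_univ, true_and] at hp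
      exact Finset.mem_union_left _ (by
        simp only [hB, Finset.mem_filter, Finset.mem_univ, true_and]
        exact ⟨hp.1, (key p h hp.1).1 hp.2⟩)
  have hBA : B ⊆ A ∪ {P} := by
    intro p hp
    rcases eq_or_ne p P with h | h
    · exact Finset.mem_union_right _ (by simp [h])
    · simp only [hB, Finset.mem_filter, Finset.mem_univ, true_and] at hp
      exact Finset.mem_union_left _ (by
        simp only [hA, Finset.mem_filter, Finset.mem_univ, true_and]
        exact ⟨hp.1, (key p h hp.1).2 hp.2⟩)
  have cA : inversions n (Equiv.swap j k * σ) = A.card := rfl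
  have cB : inversions n σ = B.card := rfl
  constructor
  · rw [cA, cB]
    calc A.card ≤ (B ∪ {P}).card := Finset.card_le_card hAB
      _ ≤ B.card + 1 := by
          simpa using Finset.card_union_le B {P}
  · rw [cA, cB]
    calc B.card ≤ (A ∪ {P}).card := Finset.card_le_card hBA
      _ ≤ A.card + 1 := by
          simpa using Finset.card_union_le A {P}

noncomputable def mallowsW (n : ℕ) (q : ℝ) (i j : Fin n) : ℝ :=
  ∑ π : Equiv.Perm (Fin n), if π i = j then q ^ inversions n π else 0

lemma mallowsW_nonneg (n : ℕ) {q : ℝ} (hq : 0 < q) (i j : Fin n) :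
    0 ≤ mallowsW n q i j :=
  Finset.sum_nonneg fun π _ => by positivity

lemma min_pos {q : ℝ} (hq : 0 < q) : 0 < min q q⁻¹ := lt_min hq (inv_pos.2 hq)

lemma min_le_one' {q : ℝ} (hq : 0 < q) : min q q⁻¹ ≤ 1 := by
  rcases le_total q 1 with h | h
  · exact (min_le_left _ _).trans h
  · exact (min_le_right _ _).trans (inv_le_one_of_one_le₀ h)

lemma pow_swap_ineq {n : ℕ} {q : ℝ} (hq : 0 < q) {j k : Fin n} (hjk : (j:ℕ)+1 = k)
    (σ : Equiv.Perm (Fin n)) :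
    min q q⁻¹ * q ^ inversions n σ ≤ q ^ inversions n (Equiv.swap j k * σ) := by
  obtain ⟨h1, h2⟩ := inversions_mul_swap σ hjk
  rcases le_total q 1 with hq1 | hq1
  · calc min q q⁻¹ * q ^ inversions n σ ≤ q * q ^ inversions n σ := by
          apply mul_le_mul_of_nonneg_right (min_le_left _ _) (by positivity)
      _ = q ^ (inversions n σ + 1) := (pow_succ' q _).symm
      _ ≤ q ^ inversions n (Equiv.swap j k * σ) :=
          pow_le_pow_of_le_one hq.le hq1 h1
  · have h3 : q ^ inversions n σ ≤ q * q ^ inversions n (Equiv.swap j k * σ) := by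
      rw [← pow_succ']
      exact pow_le_pow_right₀ hq1 h2
    calc min q q⁻¹ * q ^ inversions n σ ≤ q⁻¹ * q ^ inversions n σ := by
          apply mul_le_mul_of_nonneg_right (min_le_right _ _) (by positivity)
      _ ≤ q⁻¹ * (q * q ^ inversions n (Equiv.swap j k * σ)) := by
          apply mul_le_mul_of_nonneg_left h3 (by positivity)
      _ = q ^ inversions n (Equiv.swap j k * σ) := by
          rw [← mul_assoc, inv_mul_cancel₀ hq.ne', one_mul]

lemma mallowsW_swap_ge {n : ℕ} {q : ℝ} (hq : 0 < q) {j k : Fin n} (hjk : (j:ℕ)+1 = k)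
    (i m : Fin n) :
    min q q⁻¹ * mallowsW n q i m ≤ mallowsW n q i (Equiv.swap j k m) := by
  have heq : mallowsW n q i (Equiv.swap j k m)
      = ∑ σ : Equiv.Perm (Fin n), if σ i = m then q ^ inversions n (Equiv.swap j k * σ) else 0 := by
    rw [mallowsW, ← Equiv.sum_comp (Equiv.mulLeft (Equiv.swap j k))
      (fun π => if π i = Equiv.swap j k m then q ^ inversions n π else 0)]
    apply Finset.sum_congr rfl
    intro σ _
    simp only [Equiv.coe_mulLeft, Equiv.Perm.mul_apply, EmbeddingLike.apply_eq_iff_eq]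
  rw [heq, mallowsW, Finset.mul_sum]
  apply Finset.sum_le_sum
  intro σ _
  split_ifs
  · exact pow_swap_ineq hq hjk σ
  · simp

lemma mallowsW_chain_up {n : ℕ} {q : ℝ} (hq : 0 < q) (i : Fin n) :
    ∀ (d : ℕ) (j j' : Fin n), (j':ℕ) = (j:ℕ) + d →
      min q q⁻¹ ^ d * mallowsW n q i j ≤ mallowsW n q i j' := by
  intro d
  induction d with
  | zero =>
    intro j j' h
    have : j' = j := Fin.ext (by omega)
    simp [this]
  | succ d ih =>
    intro j j' h
    have hlt : (j:ℕ) + d < n := by have := j'.isLt; omega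
    set m : Fin n := ⟨(j:ℕ) + d, hlt⟩ with hm
    have hadj : (m:ℕ) + 1 = (j':ℕ) := by simp [hm]; omega
    have step := mallowsW_swap_ge hq hadj i m
    rw [Equiv.swap_apply_left] at step
    have ihm := ih j m (by simp [hm])
    calc min q q⁻¹ ^ (d+1) * mallowsW n q i j
        = min q q⁻¹ * (min q q⁻¹ ^ d * mallowsW n q i j) := by ring
      _ ≤ min q q⁻¹ * mallowsW n q i m :=
          mul_le_mul_of_nonneg_left ihm (min_pos hq).le
      _ ≤ mallowsW n q i j' := step

lemma mallowsW_chain_down {n : ℕ} {q : ℝ} (hq : 0 < q) (i : Fin n) :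
    ∀ (d : ℕ) (j j' : Fin n), (j:ℕ) = (j':ℕ) + d →
      min q q⁻¹ ^ d * mallowsW n q i j ≤ mallowsW n q i j' := by
  intro d
  induction d with
  | zero =>
    intro j j' h
    have : j = j' := Fin.ext (by omega)
    simp [this]
  | succ d ih =>
    intro j j' h
    have hpos : 0 < (j:ℕ) := by omega
    have hlt : (j:ℕ) - 1 < n := by have := j.isLt; omega
    set m : Fin n := ⟨(j:ℕ) - 1, hlt⟩ with hm
    have hadj : (m:ℕ) + 1 = (j:ℕ) := by simp [hm]; omega
    have step := mallowsW_swap_ge hq hadj i j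
    rw [Equiv.swap_apply_right] at step
    have ihm := ih m j' (by simp [hm]; omega)
    calc min q q⁻¹ ^ (d+1) * mallowsW n q i j
        = min q q⁻¹ ^ d * (min q q⁻¹ * mallowsW n q i j) := by ring
      _ ≤ min q q⁻¹ ^ d * mallowsW n q i m :=
          mul_le_mul_of_nonneg_left step (by positivity)
      _ ≤ mallowsW n q i j' := ihm

lemma mallowsW_all {n : ℕ} {q : ℝ} (hq : 0 < q) (i j j' : Fin n) :
    min q q⁻¹ ^ n * mallowsW n q i j ≤ mallowsW n q i j' := by
  rcases le_total (j:ℕ) (j':ℕ) with h | h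
  · have := mallowsW_chain_up hq i ((j':ℕ) - (j:ℕ)) j j' (by omega)
    refine le_trans ?_ this
    apply mul_le_mul_of_nonneg_right ?_ (mallowsW_nonneg n hq i j)
    exact pow_le_pow_of_le_one (min_pos hq).le (min_le_one' hq) (by have := j'.isLt; omega)
  · have := mallowsW_chain_down hq i ((j:ℕ) - (j':ℕ)) j j' (by omega)
    refine le_trans ?_ this
    apply mul_le_mul_of_nonneg_right ?_ (mallowsW_nonneg n hq i j)
    exact pow_le_pow_of_le_one (min_pos hq).le (min_le_one' hq) (by have := j.isLt; omega)

lemma Zsum_eq_sum_W (n : ℕ) (q : ℝ) (i : Fin n) :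
    ∑ σ : Equiv.Perm (Fin n), q ^ inversions n σ = ∑ j : Fin n, mallowsW n q i j := by
  unfold mallowsW
  rw [Finset.sum_comm]
  apply Finset.sum_congr rfl
  intro σ _
  simp

lemma Zsum_pos (n : ℕ) {q : ℝ} (hq : 0 < q) :
    0 < ∑ σ : Equiv.Perm (Fin n), q ^ inversions n σ :=
  Finset.sum_pos (fun σ _ => by positivity) Finset.univ_nonempty

lemma mallowsW_le (n : ℕ) {q : ℝ} (hq : 0 < q) (i j : Fin n) :
    (n : ℝ) * (min q q⁻¹ ^ n * mallowsW n q i j)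
      ≤ ∑ σ : Equiv.Perm (Fin n), q ^ inversions n σ := by
  rw [Zsum_eq_sum_W n q i]
  calc (n : ℝ) * (min q q⁻¹ ^ n * mallowsW n q i j)
      = ∑ _j' : Fin n, min q q⁻¹ ^ n * mallowsW n q i j := by
        rw [Finset.sum_const, Finset.card_univ, Fintype.card_fin, nsmul_eq_mul]
    _ ≤ ∑ j' : Fin n, mallowsW n q i j' :=
        Finset.sum_le_sum fun j' _ => mallowsW_all hq i j j'

lemma cardA_le (n : ℕ) (hn : 1 ≤ n) (c' d' : ℝ) (hcd : c' < d') :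
    (((Finset.univ.filter (fun j : Fin n =>
        c' < ((j:ℕ)+1)/(n:ℝ) ∧ ((j:ℕ)+1)/(n:ℝ) < d')).card : ℝ))
      ≤ (n:ℝ) * (d' - c') + 1 := by
  set A := Finset.univ.filter (fun j : Fin n =>
      c' < ((j:ℕ)+1)/(n:ℝ) ∧ ((j:ℕ)+1)/(n:ℝ) < d') with hA
  have hnR : (0:ℝ) < n := by exact_mod_cast hn
  set lo : ℤ := ⌊(n:ℝ)*c' - 1⌋ + 1 with hlo
  set hi : ℤ := ⌈(n:ℝ)*d' - 1⌉ - 1 with hhi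
  have hmem : ∀ j ∈ A, ((j:ℕ):ℤ) ∈ Finset.Icc lo hi := by
    intro j hj
    rw [hA, Finset.mem_filter] at hj
    obtain ⟨-, h1, h2⟩ := hj
    rw [div_lt_iff₀ hnR] at h2
    rw [lt_div_iff₀ hnR] at h1
    rw [Finset.mem_Icc]
    constructor
    · rw [hlo, Int.add_one_le_iff, Int.floor_lt]
      push_cast
      nlinarith
    · rw [hhi, Int.le_sub_one_iff, Int.lt_ceil]
      push_cast
      nlinarith
  have hcard : A.card ≤ (Finset.Icc lo hi).card := by
    exact Finset.card_le_card_of_injOn (fun j : Fin n => ((j:ℕ):ℤ)) hmem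
      (fun x _ y _ hxy => Fin.ext (by simpa using hxy))
  have hicc : (Finset.Icc lo hi).card = (hi + 1 - lo).toNat := Int.card_Icc lo hi
  have hlo' : (n:ℝ)*c' - 1 < (lo:ℝ) := by
    rw [hlo]; push_cast
    exact Int.lt_floor_add_one _
  have hhi' : (hi:ℝ) < (n:ℝ)*d' - 1 := by
    rw [hhi]; push_cast
    have := Int.ceil_lt_add_one ((n:ℝ)*d' - 1)
    linarith
  by_cases hz : 0 ≤ hi + 1 - lo
  · have : ((hi + 1 - lo).toNat : ℝ) = (hi:ℝ) + 1 - lo := by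
      have h2 := Int.toNat_of_nonneg hz
      have h3 : (((hi + 1 - lo).toNat : ℤ) : ℝ) = ((hi + 1 - lo : ℤ) : ℝ) := by
        exact_mod_cast congrArg (fun z : ℤ => (z : ℝ)) h2
      push_cast at h3 ⊢
      linarith
    have h1 : (A.card : ℝ) ≤ ((hi + 1 - lo).toNat : ℝ) := by
      exact_mod_cast hcard.trans_eq hicc
    linarith
  · have : (hi + 1 - lo).toNat = 0 := Int.toNat_of_nonpos (le_of_not_ge hz)
    have h1 : A.card = 0 := by omega
    rw [h1]
    simp only [Nat.cast_zero]
    nlinarith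

lemma mallowsPMF_nonneg (n : ℕ) {q : ℝ} (hq : 0 < q) (π : Equiv.Perm (Fin n)) :
    0 ≤ mallowsPMF n q π := by
  unfold mallowsPMF
  have := Zsum_pos n hq
  positivity

lemma mallowsExp_le_card (n : ℕ) (hn : 1 ≤ n) {q : ℝ} (hq : 0 < q) (i : Fin n)
    (g : Equiv.Perm (Fin n) → ℝ) (A : Finset (Fin n))
    (hg0 : ∀ π, 0 ≤ g π) (hg : ∀ π, g π ≤ if π i ∈ A then 1 else 0) :
    mallowsExp n q g ≤ (A.card : ℝ) / ((n:ℝ) * min q q⁻¹ ^ n) := by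
  classical
  have hZ := Zsum_pos n hq
  have hnr : (0:ℝ) < (n:ℝ) * min q q⁻¹ ^ n := by
    have := min_pos hq
    have hnR : (0:ℝ) < n := by exact_mod_cast hn
    positivity
  have step1 : mallowsExp n q g
      ≤ ∑ π : Equiv.Perm (Fin n), if π i ∈ A then mallowsPMF n q π else 0 := by
    apply Finset.sum_le_sum
    intro π _
    have hp := mallowsPMF_nonneg n hq π
    by_cases h : π i ∈ A
    · simp only [h, if_true]
      calc mallowsPMF n q π * g π ≤ mallowsPMF n q π * 1 := by
            apply mul_le_mul_of_nonneg_left _ hp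
            simpa [h] using hg π
        _ = mallowsPMF n q π := mul_one _
    · simp only [h, if_false]
      have : g π ≤ 0 := by simpa [h] using hg π
      have := mul_nonpos_of_nonneg_of_nonpos hp this
      linarith
  have step2 : (∑ π : Equiv.Perm (Fin n), if π i ∈ A then mallowsPMF n q π else 0)
      = ∑ j ∈ A, mallowsW n q i j / (∑ σ : Equiv.Perm (Fin n), q ^ inversions n σ) := by
    have : ∀ π : Equiv.Perm (Fin n), (if π i ∈ A then mallowsPMF n q π else 0)
        = ∑ j ∈ A, if π i = j then mallowsPMF n q π else 0 := by
      intro π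
      rw [Finset.sum_ite_eq A (π i) (fun _ => mallowsPMF n q π)]
    rw [Finset.sum_congr rfl (fun π _ => this π), Finset.sum_comm]
    apply Finset.sum_congr rfl
    intro j _
    rw [mallowsW, Finset.sum_div]
    apply Finset.sum_congr rfl
    intro π _
    unfold mallowsPMF
    split_ifs <;> simp
  have step3 : ∀ j : Fin n, mallowsW n q i j / (∑ σ : Equiv.Perm (Fin n), q ^ inversions n σ)
      ≤ 1 / ((n:ℝ) * min q q⁻¹ ^ n) := by
    intro j
    rw [div_le_div_iff₀ hZ hnr, one_mul]
    calc mallowsW n q i j * ((n:ℝ) * min q q⁻¹ ^ n)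
        = (n : ℝ) * (min q q⁻¹ ^ n * mallowsW n q i j) := by ring
      _ ≤ _ := mallowsW_le n hq i j
  calc mallowsExp n q g ≤ _ := step1
    _ = _ := step2
    _ ≤ ∑ _j ∈ A, 1 / ((n:ℝ) * min q q⁻¹ ^ n) :=
        Finset.sum_le_sum (fun j _ => step3 j)
    _ = (A.card : ℝ) / ((n:ℝ) * min q q⁻¹ ^ n) := by
        rw [Finset.sum_const, nsmul_eq_mul, mul_one_div]

noncomputable def bump (c d η : ℝ) : ℝ → ℝ := fun x =>
  max 0 (min 1 (min ((x - (c - η))/η) (((d + η) - x)/η)))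

lemma bump_continuous (c d η : ℝ) : Continuous (bump c d η) := by
  unfold bump
  fun_prop

lemma bump_nonneg (c d η : ℝ) (x : ℝ) : 0 ≤ bump c d η x := le_max_left _ _

lemma bump_le_one (c d η : ℝ) (x : ℝ) : bump c d η x ≤ 1 :=
  max_le zero_le_one (min_le_left _ _)

lemma bump_eq_one (c d η : ℝ) (hη : 0 < η) {x : ℝ} (hx : c ≤ x) (hx' : x ≤ d) :
    1 ≤ bump c d η x := by
  unfold bump
  have h1 : (1:ℝ) ≤ (x - (c - η))/η := by
    rw [le_div_iff₀ hη]; linarith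
  have h2 : (1:ℝ) ≤ ((d + η) - x)/η := by
    rw [le_div_iff₀ hη]; linarith
  exact le_trans (le_min le_rfl (le_min h1 h2)) (le_max_right _ _)

lemma bump_eq_zero (c d η : ℝ) (hη : 0 < η) {x : ℝ} (hx : x ∉ Set.Ioo (c - η) (d + η)) :
    bump c d η x ≤ 0 := by
  unfold bump
  rw [Set.mem_Ioo, not_and_or, not_lt, not_lt] at hx
  apply max_le le_rfl
  rcases hx with h | h
  · refine le_trans (min_le_right _ _) (le_trans (min_le_left _ _) ?_)
    rw [div_nonpos_iff]
    right; constructor <;> linarith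
  · refine le_trans (min_le_right _ _) (le_trans (min_le_right _ _) ?_)
    rw [div_nonpos_iff]
    right; constructor <;> linarith

noncomputable def bumpBCF (c d η : ℝ) : BoundedContinuousFunction ℝ ℝ :=
  BoundedContinuousFunction.ofNormedAddCommGroup (bump c d η) (bump_continuous c d η) 1
    (fun x => by
      rw [Real.norm_eq_abs, abs_le]
      exact ⟨by linarith [bump_nonneg c d η x], bump_le_one c d η x⟩)

@[simp] lemma bumpBCF_apply (c d η : ℝ) (x : ℝ) : bumpBCF c d η x = bump c d η x := rfl

lemma exp_neg_two_le (x : ℝ) (hx : 0 ≤ x) (hx' : x ≤ 1/2) :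
    Real.exp (-(2*x)) ≤ 1 - x := by
  have h1 : 1 + 2*x ≤ Real.exp (2*x) := by linarith [Real.add_one_le_exp (2*x)]
  have h2 : Real.exp (-(2*x)) * Real.exp (2*x) = 1 := by
    rw [← Real.exp_add]; simp
  have h3 : 0 < Real.exp (-(2*x)) := Real.exp_pos _
  nlinarith

lemma Ioc_le_integral (v : Measure ℝ) [IsProbabilityMeasure v] (c d η : ℝ)
    (hcd : c < d) (hη : 0 < η) :
    (v (Set.Ioc c d)).toReal ≤ ∫ y, bumpBCF c d η y ∂v := by
  have hind : Integrable ((Set.Ioc c d).indicator (fun _ => (1:ℝ))) v :=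
    (integrable_const (1:ℝ)).indicator measurableSet_Ioc
  have hb : Integrable (fun y => bumpBCF c d η y) v :=
    (bumpBCF c d η).integrable v
  have hmono : ∀ y, (Set.Ioc c d).indicator (fun _ => (1:ℝ)) y ≤ bumpBCF c d η y := by
    intro y
    by_cases hy : y ∈ Set.Ioc c d
    · rw [Set.indicator_of_mem hy]
      exact bumpBCF_apply c d η y ▸ bump_eq_one c d η hη hy.1.le hy.2
    · rw [Set.indicator_of_notMem hy]
      exact bump_nonneg c d η y
  calc (v (Set.Ioc c d)).toReal
      = ∫ y, (Set.Ioc c d).indicator (fun _ => (1:ℝ)) y ∂v := by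
        rw [MeasureTheory.integral_indicator_const (1:ℝ) measurableSet_Ioc]
        simp
        rfl
    _ ≤ ∫ y, bumpBCF c d η y ∂v := integral_mono hind hb hmono

lemma cdf_diff_eq (v : Measure ℝ) [IsProbabilityMeasure v] (c d : ℝ) (hcd : c ≤ d) :
    (v (Set.Iic d)).toReal - (v (Set.Iic c)).toReal = (v (Set.Ioc c d)).toReal := by
  have hsplit : v (Set.Iic d) = v (Set.Iic c) + v (Set.Ioc c d) := by
    rw [← Set.Iic_union_Ioc_eq_Iic hcd]
    exact measure_union (by
      simp [Set.disjoint_left]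
      intro x hx h1
      linarith) measurableSet_Ioc
  rw [hsplit, ENNReal.toReal_add (measure_ne_top v _) (measure_ne_top v _)]
  ring

/-- **Lemma 3.10.** If `n(1-qₙ) → β`, `aₙ ∈ {1,…,n}` with `aₙ/n → a ∈ [0,1]`, and along a
subsequence `tₙ` the laws of `π(a_{tₙ})/tₙ` under `μ_{tₙ,q_{tₙ}}` converge in distribution
to a probability measure `v`, then the distribution function of `v` is absolutely
continuous. -/
theorem limit_cdf_absolutely_continuous
    (q : ℕ → ℝ) (hq : ∀ n, 0 < q n) (β : ℝ)
    (hβ : Tendsto (fun n : ℕ => (n : ℝ) * (1 - q n)) atTop (nhds β))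
    (a : ℕ → ℕ) (ha : ∀ n : ℕ, 1 ≤ n → 1 ≤ a n ∧ a n ≤ n)
    (av : ℝ) (hav : av ∈ Set.Icc (0 : ℝ) 1)
    (haa : Tendsto (fun n : ℕ => (a n : ℝ) / n) atTop (nhds av))
    (t : ℕ → ℕ) (hmono : StrictMono t)
    (v : Measure ℝ) (hv : IsProbabilityMeasure v)
    (hconv : ∀ f : BoundedContinuousFunction ℝ ℝ,
      Tendsto (fun n : ℕ =>
          mallowsExp (t n) (q (t n))
            (fun π => f ((permAct (t n) π (a (t n)) : ℝ) / (t n))))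
        atTop (nhds (∫ y, f y ∂v))) :
    AbsolutelyContinuousFun (fun y => (v (Set.Iic y)).toReal) := by
  classical
  set M : ℝ := |β| + 1 with hM
  have hM0 : 0 < M := by positivity
  set C : ℝ := Real.exp (2*M) with hCdef
  have hC0 : 0 < C := Real.exp_pos _
  -- eventual control of `min q q⁻¹ ^ n`
  have hev : ∀ᶠ n : ℕ in atTop, Real.exp (-(2*M)) ≤ min (q n) (q n)⁻¹ ^ n := by
    have h1 : ∀ᶠ n : ℕ in atTop, |(n:ℝ) * (1 - q n) - β| < 1 := by
      have := Metric.tendsto_nhds.mp hβ 1 one_pos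
      simpa [Real.dist_eq] using this
    have h2 : ∀ᶠ n : ℕ in atTop, 2*M ≤ (n:ℝ) := by
      rw [eventually_atTop]
      exact ⟨⌈2*M⌉₊, fun n hn => le_trans (Nat.le_ceil _) (by exact_mod_cast hn)⟩
    filter_upwards [h1, h2, eventually_ge_atTop 1] with n hn1 hn2 hn3
    have hnR : (1:ℝ) ≤ (n:ℝ) := by exact_mod_cast hn3
    have hnpos : (0:ℝ) < (n:ℝ) := by linarith
    have habs : |1 - q n| ≤ M / n := by
      have h4 : |(n:ℝ) * (1 - q n)| ≤ M := by
        have := abs_sub_abs_le_abs_sub ((n:ℝ) * (1 - q n)) β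
        rw [hM]; linarith
      rw [abs_mul, abs_of_pos hnpos] at h4
      rw [le_div_iff₀ hnpos]
      linarith
    have hq1 : 1 - M/n ≤ q n := by
      have := abs_le.mp habs
      linarith [this.2]
    have hq2 : q n ≤ 1 + M/n := by
      have := abs_le.mp habs
      linarith [this.1]
    have hMn0 : 0 ≤ M/n := by positivity
    have hr : 1 - M/n ≤ min (q n) (q n)⁻¹ := by
      rw [le_min_iff]
      refine ⟨hq1, ?_⟩
      have hp : (0:ℝ) < 1 + M/n := by linarith
      have step1 : (1 + M/n)⁻¹ ≤ (q n)⁻¹ := by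
        apply inv_anti₀ (hq n) hq2
      have step2 : 1 - M/n ≤ (1 + M/n)⁻¹ := by
        rw [inv_eq_one_div, le_div_iff₀ hp]
        nlinarith
      linarith
    have hhalf : M/n ≤ 1/2 := by
      rw [div_le_iff₀ hnpos]
      linarith
    have h5 : Real.exp (-(2*(M/n))) ≤ 1 - M/n := exp_neg_two_le _ hMn0 hhalf
    have h6 : Real.exp (-(2*(M/n))) ^ n = Real.exp (-(2*M)) := by
      rw [← Real.exp_nat_mul]
      congr 1
      field_simp
    calc Real.exp (-(2*M)) = Real.exp (-(2*(M/n))) ^ n := h6.symm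
      _ ≤ min (q n) (q n)⁻¹ ^ n :=
          pow_le_pow_left₀ (Real.exp_pos _).le (h5.trans hr) n
  -- Lipschitz-type bound
  have key : ∀ c d : ℝ, c < d → (v (Set.Ioc c d)).toReal ≤ C * (d - c) := by
    intro c d hcd
    refine le_of_forall_pos_le_add ?_
    intro ε hε
    set η := ε / (2*C) with hηdef
    have hη : 0 < η := by positivity
    have hI : (v (Set.Ioc c d)).toReal ≤ ∫ y, bumpBCF c d η y ∂v :=
      Ioc_le_integral v c d η hcd hη
    have hevm : ∀ᶠ m : ℕ in atTop,
        mallowsExp (t m) (q (t m))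
          (fun π => bumpBCF c d η ((permAct (t m) π (a (t m)) : ℝ) / (t m)))
        ≤ C * (d - c + 2*η) + C / (t m) := by
      obtain ⟨N, hN⟩ := eventually_atTop.mp hev
      refine eventually_atTop.2 ⟨max N 1, fun m hm => ?_⟩
      have htm : m ≤ t m := hmono.le_apply
      set n := t m with hn
      have hn1 : 1 ≤ n := le_trans (le_trans (le_max_right N 1) hm) htm
      have hnN : N ≤ n := le_trans (le_trans (le_max_left N 1) hm) htm
      have hrn := hN n hnN
      have hnpos : (0:ℝ) < (n:ℝ) := by exact_mod_cast hn1
      obtain ⟨han1, han2⟩ := ha n hn1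
      set i : Fin n := ⟨a n - 1, by omega⟩ with hi
      set A : Finset (Fin n) := Finset.univ.filter (fun j : Fin n =>
        (c - η) < ((j:ℕ)+1)/(n:ℝ) ∧ ((j:ℕ)+1)/(n:ℝ) < (d + η)) with hA
      have hperm : ∀ π : Equiv.Perm (Fin n),
          ((permAct n π (a n) : ℝ) / n) = (((π i : ℕ) : ℝ) + 1)/(n:ℝ) := by
        intro π
        rw [permAct, dif_pos ⟨han1, han2⟩]
        push_cast
        rfl
      set g : Equiv.Perm (Fin n) → ℝ :=
        fun π => bumpBCF c d η ((permAct n π (a n) : ℝ) / n) with hg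
      have hg0 : ∀ π, 0 ≤ g π := fun π => bump_nonneg _ _ _ _
      have hgle : ∀ π, g π ≤ if π i ∈ A then 1 else 0 := by
        intro π
        by_cases h : π i ∈ A
        · rw [if_pos h]; exact bump_le_one _ _ _ _
        · rw [if_neg h]
          calc g π = bump c d η ((((π i : ℕ) : ℝ) + 1)/(n:ℝ)) := by
                rw [hg]; simp only [bumpBCF_apply, hperm π]
            _ ≤ 0 := by
                apply bump_eq_zero c d η hη
                rw [hA, Finset.mem_filter] at h
                simp only [Finset.mem_univ, true_and] at h
                rw [Set.mem_Ioo]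
                exact h
      have hb1 := mallowsExp_le_card n hn1 (hq n) i g A hg0 hgle
      have hb2 := cardA_le n hn1 (c - η) (d + η) (by linarith)
      rw [← hA] at hb2
      have hmin : (0:ℝ) < min (q n) (q n)⁻¹ ^ n := by
        have : (0:ℝ) < min (q n) (q n)⁻¹ := lt_min (hq n) (inv_pos.2 (hq n))
        positivity
      have hexp : (0:ℝ) < Real.exp (-(2*M)) := Real.exp_pos _
      have hstep : (A.card : ℝ) / ((n:ℝ) * min (q n) (q n)⁻¹ ^ n)
          ≤ ((n:ℝ) * (d - c + 2*η) + 1) / ((n:ℝ) * Real.exp (-(2*M))) := by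
        apply div_le_div₀ (by nlinarith) (by rw [show d + η - (c - η) = d - c + 2*η from by ring] at hb2; exact hb2)
          (by positivity)
        exact mul_le_mul_of_nonneg_left hrn hnpos.le
      have heq : ((n:ℝ) * (d - c + 2*η) + 1) / ((n:ℝ) * Real.exp (-(2*M)))
          = C * (d - c + 2*η) + C / n := by
        rw [hCdef, Real.exp_neg]
        field_simp
      calc mallowsExp n (q n) g ≤ _ := hb1
        _ ≤ _ := hstep
        _ = _ := heq
    have hlim := hconv (bumpBCF c d η)
    have hrlim : Tendsto (fun m : ℕ => C * (d - c + 2*η) + C / (t m)) atTop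
        (nhds (C * (d - c + 2*η) + 0)) := by
      apply Tendsto.add tendsto_const_nhds
      apply Tendsto.div_atTop tendsto_const_nhds
      exact tendsto_natCast_atTop_atTop.comp hmono.tendsto_atTop
    have hfin : ∫ y, bumpBCF c d η y ∂v ≤ C * (d - c + 2*η) + 0 :=
      le_of_tendsto_of_tendsto hlim hrlim hevm
    have heta : C * (d - c + 2*η) = C*(d-c) + ε := by
      rw [hηdef]
      field_simp
    linarith
  -- conclude absolute continuity
  intro ε hε
  refine ⟨ε/(C+1), by positivity, ?_⟩
  intro m c d hcd hdisj hsum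
  have habs : ∀ k ∈ Finset.range m, |(v (Set.Iic (d k))).toReal - (v (Set.Iic (c k))).toReal|
      ≤ C * (d k - c k) := by
    intro k hk
    rw [Finset.mem_range] at hk
    have h1 := hcd k hk
    rw [cdf_diff_eq v (c k) (d k) h1.le, abs_of_nonneg ENNReal.toReal_nonneg]
    exact key (c k) (d k) h1
  calc ∑ k ∈ Finset.range m, |(v (Set.Iic (d k))).toReal - (v (Set.Iic (c k))).toReal|
      ≤ ∑ k ∈ Finset.range m, C * (d k - c k) := Finset.sum_le_sum habs
    _ = C * ∑ k ∈ Finset.range m, (d k - c k) := by rw [Finset.mul_sum]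
    _ < C * (ε/(C+1)) := by
        exact mul_lt_mul_of_pos_left hsum hC0
    _ < ε := by
        rw [mul_div_assoc']
        rw [div_lt_iff₀ (by positivity)]
        nlinarith
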